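/- arXiv:1412.3631 — 3 statements merged into one kernel-verified Lean document; each statement's English description precedes it below -/
import Mathlib

section
/- Let R be a semilocal ring (not necessarily commutative), I a left ideal of R, and a ∈ R such that Ra + I = R. Then the coset a + I contains a unit of R. -/
section Helpers
variable {R M : Type*} [Ring R] [AddCommGroup M] [Module R M]

/-- comap subtype commutes with sup for submodules below N. -/
lemma comap_subtype_sup_of_le {T A N : Submodule R M} (hT : T ≤ N) (hA : A ≤ N) :
    (T ⊔ A).comap N.subtype = T.comap N.subtype ⊔ A.comap N.subtype := by
  refine le_antisymm ?_ (sup_le (Submodule.comap_mono le_sup_left)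
    (Submodule.comap_mono le_sup_right))
  rintro ⟨x, hxN⟩ hx
  simp only [Submodule.mem_comap, Submodule.coe_subtype] at hx
  obtain ⟨y, hy, z, hz, rfl⟩ := Submodule.mem_sup.mp hx
  refine Submodule.mem_sup.mpr ⟨⟨y, hT hy⟩, by simpa [Submodule.mem_comap], ⟨z, hA hz⟩,
    by simpa [Submodule.mem_comap], rfl⟩

/-- An inner direct decomposition gives complementary comap'd submodules. -/
lemma isCompl_comap_of_inner {T A N : Submodule R M} (hT : T ≤ N) (hA : A ≤ N)
    (hdisj : T ⊓ A = ⊥) (hsup : T ⊔ A = N) :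
    IsCompl (T.comap N.subtype) (A.comap N.subtype) := by
  constructor
  · rw [disjoint_iff, ← Submodule.comap_inf, hdisj]
    refine le_antisymm (fun x hx => ?_) bot_le
    have : (x : M) ∈ (⊥ : Submodule R M) := hx
    simp only [Submodule.mem_bot] at this ⊢
    exact Subtype.ext this
  · rw [codisjoint_iff, ← comap_subtype_sup_of_le hT hA, hsup,
      Submodule.comap_subtype_self]

/-- Glue: inner decompositions with isomorphic pieces give isomorphic sups. -/
lemma inner_prod_equiv {T A N : Submodule R M} (hT : T ≤ N) (hA : A ≤ N)
    (hdisj : T ⊓ A = ⊥) (hsup : T ⊔ A = N) :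
    Nonempty ((T × A) ≃ₗ[R] N) := by
  have hc := isCompl_comap_of_inner hT hA hdisj hsup
  exact ⟨(LinearEquiv.prodCongr (Submodule.comapSubtypeEquivOfLe hT).symm
      (Submodule.comapSubtypeEquivOfLe hA).symm).trans
    (Submodule.prodEquivOfIsCompl _ _ hc)⟩

lemma glue_equiv {T A T' A' N₁ N₂ : Submodule R M} (hT : T ≤ N₁) (hA : A ≤ N₁)
    (hdisj : T ⊓ A = ⊥) (hsup : T ⊔ A = N₁)
    (hT' : T' ≤ N₂) (hA' : A' ≤ N₂) (hdisj' : T' ⊓ A' = ⊥) (hsup' : T' ⊔ A' = N₂)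
    (e₁ : Nonempty (T ≃ₗ[R] T')) (e₂ : Nonempty (A ≃ₗ[R] A')) :
    Nonempty (N₁ ≃ₗ[R] N₂) := by
  obtain ⟨u⟩ := inner_prod_equiv hT hA hdisj hsup
  obtain ⟨v⟩ := inner_prod_equiv hT' hA' hdisj' hsup'
  exact ⟨u.symm.trans ((LinearEquiv.prodCongr e₁.some e₂.some).trans v)⟩

/-- Complement within a submodule, in a semisimple module. -/
lemma exists_inner_compl [IsSemisimpleModule R M] {T N : Submodule R M} (h : T ≤ N) :
    ∃ A ≤ N, T ⊓ A = ⊥ ∧ T ⊔ A = N := by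
  obtain ⟨C, hC⟩ := exists_isCompl T
  refine ⟨C ⊓ N, inf_le_right, ?_, ?_⟩
  · rw [← inf_assoc, disjoint_iff.mp hC.disjoint, bot_inf_eq]
  · rw [← sup_inf_assoc_of_le _ h, codisjoint_iff.mp hC.codisjoint, top_inf_eq]

end Helpers

section Cancel
variable {R M : Type*} [Ring R] [AddCommGroup M] [Module R M]

lemma common_compl_equiv {T A B : Submodule R M} (h1 : IsCompl T A) (h2 : IsCompl T B) :
    Nonempty (A ≃ₗ[R] B) :=
  ⟨(Submodule.quotientEquivOfIsCompl T A h1).symm.trans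
    (Submodule.quotientEquivOfIsCompl T B h2)⟩

lemma isCompl_of_proj_ne_zero {T A T' B : Submodule R M}
    [IsSimpleModule R T] [IsSimpleModule R T']
    (hA : IsCompl T A) (hB : IsCompl T' B)
    (h : (Submodule.projectionOnto T' B hB).comp T.subtype ≠ 0) :
    IsCompl T B := by
  set π := Submodule.projectionOnto T' B hB with hπdef
  have hbij : Function.Bijective (π.comp T.subtype) := LinearMap.bijective_of_ne_zero h
  constructor
  · rw [disjoint_iff]
    refine le_antisymm (fun x hx => ?_) bot_le
    have h1 : π x = 0 := (Submodule.projectionOnto_apply_eq_zero_iff hB).mpr hx.2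
    have h2 : (π.comp T.subtype) ⟨x, hx.1⟩ = 0 := by
      simpa [LinearMap.comp_apply] using h1
    have h3 : (⟨x, hx.1⟩ : T) = 0 := hbij.1 (by rw [h2, map_zero])
    have : x = 0 := congrArg Subtype.val h3
    simpa [Submodule.mem_bot] using this
  · rw [codisjoint_iff, eq_top_iff]
    intro m _
    obtain ⟨t, ht⟩ := hbij.2 (π m)
    have hmB : m - (t : M) ∈ B := by
      rw [← Submodule.projectionOnto_apply_eq_zero_iff hB, map_sub]
      have : π (t : M) = π m := by
        simpa [LinearMap.comp_apply] using ht
      rw [this, sub_self]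
    have hm : m = (t : M) + (m - t) := by abel
    exact hm ▸ Submodule.add_mem_sup t.2 hmB

/-- Simple-step cancellation, ambient = top. -/
lemma simple_cancel_top [IsSemisimpleModule R M] {T A T' B : Submodule R M}
    (hA : IsCompl T A) (hB : IsCompl T' B)
    (hsT : IsSimpleModule R T) (hsT' : IsSimpleModule R T')
    (hTT' : Nonempty (T ≃ₗ[R] T')) : Nonempty (A ≃ₗ[R] B) := by
  haveI := hsT; haveI := hsT'
  by_cases hπ : (Submodule.projectionOnto T' B hB).comp T.subtype = 0
  · by_cases hρ : (Submodule.projectionOnto T A hA).comp T'.subtype = 0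
    · -- both vanish : T ≤ B, T' ≤ A
      have hTB : T ≤ B := fun x hx => by
        have := LinearMap.congr_fun hπ ⟨x, hx⟩
        simpa [LinearMap.comp_apply,
          Submodule.projectionOnto_apply_eq_zero_iff hB] using this
      have hT'A : T' ≤ A := fun x hx => by
        have := LinearMap.congr_fun hρ ⟨x, hx⟩
        simpa [LinearMap.comp_apply,
          Submodule.projectionOnto_apply_eq_zero_iff hA] using this
      obtain ⟨A₀, hA₀le, hA₀disj, hA₀sup⟩ := exists_inner_compl hT'A
      obtain ⟨B₀, hB₀le, hB₀disj, hB₀sup⟩ := exists_inner_compl hTB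
      have hDA₀ : IsCompl (T ⊔ T') A₀ := by
        constructor
        · rw [disjoint_iff]
          refine le_antisymm (fun x hx => ?_) bot_le
          obtain ⟨t, ht, t', ht', hx'⟩ := Submodule.mem_sup.mp hx.1
          have htA : t ∈ A := by
            have : t = x - t' := by rw [← hx']; abel
            exact this ▸ Submodule.sub_mem _ (hA₀le hx.2) (hT'A ht')
          have ht0 : t = 0 := by
            have : t ∈ T ⊓ A := ⟨ht, htA⟩
            rwa [disjoint_iff.mp hA.disjoint, Submodule.mem_bot] at this
          have hxt' : x = t' := by rw [← hx', ht0, zero_add]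
          have : x ∈ T' ⊓ A₀ := ⟨hxt' ▸ ht', hx.2⟩
          rwa [hA₀disj, Submodule.mem_bot] at this
        · rw [codisjoint_iff, sup_assoc, hA₀sup, ← codisjoint_iff]
          exact hA.codisjoint
      have hDB₀ : IsCompl (T ⊔ T') B₀ := by
        constructor
        · rw [disjoint_iff]
          refine le_antisymm (fun x hx => ?_) bot_le
          obtain ⟨t, ht, t', ht', hx'⟩ := Submodule.mem_sup.mp hx.1
          have ht'B : t' ∈ B := by
            have : t' = x - t := by rw [← hx']; abel
            exact this ▸ Submodule.sub_mem _ (hB₀le hx.2) (hTB ht)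
          have ht'0 : t' = 0 := by
            have : t' ∈ T' ⊓ B := ⟨ht', ht'B⟩
            rwa [disjoint_iff.mp hB.disjoint, Submodule.mem_bot] at this
          have hxt : x = t := by rw [← hx', ht'0, add_zero]
          have : x ∈ T ⊓ B₀ := ⟨hxt ▸ ht, hx.2⟩
          rwa [hB₀disj, Submodule.mem_bot] at this
        · rw [codisjoint_iff, sup_comm T T', sup_assoc, hB₀sup, ← codisjoint_iff]
          exact hB.codisjoint
      have j := common_compl_equiv hDA₀ hDB₀
      exact glue_equiv hT'A hA₀le hA₀disj hA₀sup hTB hB₀le hB₀disj hB₀sup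
        ⟨hTT'.some.symm⟩ j
    · -- ρ|T' ≠ 0 : IsCompl T' A, conclude
      have : IsCompl T' A := isCompl_of_proj_ne_zero hB hA hρ
      exact common_compl_equiv this hB
  · have : IsCompl T B := isCompl_of_proj_ne_zero hA hB hπ
    exact common_compl_equiv hA this

end Cancel

section Transport
variable {R M : Type*} [Ring R] [AddCommGroup M] [Module R M]

/-- Transport an inner decomposition along an isomorphism of submodules. -/
lemma innerCompl_map {N₁ N₂ T A : Submodule R M} (e : N₁ ≃ₗ[R] N₂)
    (hT : T ≤ N₁) (hA : A ≤ N₁) (hdisj : T ⊓ A = ⊥) (hsup : T ⊔ A = N₁) :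
    ∃ T' A' : Submodule R M, T' ≤ N₂ ∧ A' ≤ N₂ ∧ T' ⊓ A' = ⊥ ∧ T' ⊔ A' = N₂ ∧
      Nonempty (T ≃ₗ[R] T') ∧ Nonempty (A ≃ₗ[R] A') := by
  set el : N₁ →ₗ[R] N₂ := (e : N₁ →ₗ[R] N₂) with heldef
  have hel : Function.Injective el := e.injective
  set Tc := T.comap N₁.subtype with hTc
  set Ac := A.comap N₁.subtype with hAc
  have hinfc : Tc ⊓ Ac = ⊥ := by
    rw [hTc, hAc, ← Submodule.comap_inf, hdisj, Submodule.comap_bot, Submodule.ker_subtype]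
  have hsupc : Tc ⊔ Ac = ⊤ := by
    rw [hTc, hAc, ← comap_subtype_sup_of_le hT hA, hsup, Submodule.comap_subtype_self]
  refine ⟨(Tc.map el).map N₂.subtype, (Ac.map el).map N₂.subtype,
    Submodule.map_subtype_le _ _, Submodule.map_subtype_le _ _, ?_, ?_, ?_, ?_⟩
  · rw [← Submodule.map_inf _ (Submodule.injective_subtype N₂),
      ← Submodule.map_inf _ hel, hinfc, Submodule.map_bot, Submodule.map_bot]
  · rw [← Submodule.map_sup, ← Submodule.map_sup, hsupc, Submodule.map_top,
      (LinearMap.range_eq_top (f := el)).mpr e.surjective, Submodule.map_top,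
      Submodule.range_subtype]
  · exact ⟨((Submodule.comapSubtypeEquivOfLe hT).symm.trans (e.submoduleMap Tc)).trans
      (N₂.equivSubtypeMap (Tc.map el))⟩
  · exact ⟨((Submodule.comapSubtypeEquivOfLe hA).symm.trans (e.submoduleMap Ac)).trans
      (N₂.equivSubtypeMap (Ac.map el))⟩
end Transport

section CancelMain
variable {R M : Type*} [Ring R] [AddCommGroup M] [Module R M]

/-- Simple-step cancellation, inner version. -/
lemma simple_cancel_inner [IsSemisimpleModule R M] {N T A T' B : Submodule R M}
    (hT : T ≤ N) (hA : A ≤ N) (hdisj : T ⊓ A = ⊥) (hsup : T ⊔ A = N)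
    (hT' : T' ≤ N) (hB : B ≤ N) (hdisj' : T' ⊓ B = ⊥) (hsup' : T' ⊔ B = N)
    (hsT : IsSimpleModule R T) (hsT' : IsSimpleModule R T')
    (hTT' : Nonempty (T ≃ₗ[R] T')) : Nonempty (A ≃ₗ[R] B) := by
  have hc1 : IsCompl (T.comap N.subtype) (A.comap N.subtype) :=
    isCompl_comap_of_inner hT hA hdisj hsup
  have hc2 : IsCompl (T'.comap N.subtype) (B.comap N.subtype) :=
    isCompl_comap_of_inner hT' hB hdisj' hsup'
  have e1 : (T.comap N.subtype) ≃ₗ[R] T := Submodule.comapSubtypeEquivOfLe hT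
  have e2 : (T'.comap N.subtype) ≃ₗ[R] T' := Submodule.comapSubtypeEquivOfLe hT'
  have hs1 : IsSimpleModule R (T.comap N.subtype) := haveI := hsT; .congr e1
  have hs2 : IsSimpleModule R (T'.comap N.subtype) := haveI := hsT'; .congr e2
  obtain ⟨j⟩ := simple_cancel_top hc1 hc2 hs1 hs2
    ⟨(e1.trans hTT'.some).trans e2.symm⟩
  exact ⟨((Submodule.comapSubtypeEquivOfLe hA).symm.trans j).trans
    (Submodule.comapSubtypeEquivOfLe hB)⟩

/-- Cancellation for semisimple Artinian modules. -/
theorem cancel_compl [IsSemisimpleModule R M] [IsArtinian R M] :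
    ∀ A B A' B' : Submodule R M, IsCompl A A' → IsCompl B B' →
      Nonempty (A ≃ₗ[R] B) → Nonempty (A' ≃ₗ[R] B') := by
  have hwf : WellFounded ((· < ·) : Submodule R M → Submodule R M → Prop) :=
    IsWellFounded.wf
  intro A
  induction A using hwf.induction with
  | _ A ih =>
  intro B A' B' hA hB hAB
  rcases eq_or_ne A ⊥ with rfl | hbot
  · have hBbot : B = ⊥ := by
      haveI : Subsingleton B := by
        haveI : Subsingleton (⊥ : Submodule R M) := inferInstance
        exact hAB.some.symm.toEquiv.subsingleton
      exact Submodule.eq_bot_of_subsingleton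
    subst hBbot
    have h1 : A' = ⊤ := by simpa [codisjoint_iff] using hA.codisjoint
    have h2 : B' = ⊤ := by simpa [codisjoint_iff] using hB.codisjoint
    exact ⟨(LinearEquiv.ofEq _ _ h1).trans (LinearEquiv.ofEq _ _ h2.symm)⟩
  · -- pick an atom T ≤ A
    obtain ⟨T, hTatom, hTA⟩ := (eq_bot_or_exists_atom_le A).resolve_left hbot
    have hsT : IsSimpleModule R T := (isSimpleModule_iff_isAtom).mpr hTatom
    obtain ⟨A₁, hA₁le, hA₁disj, hA₁sup⟩ := exists_inner_compl hTA
    -- transport to B side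
    obtain ⟨T', B₁, hT'le, hB₁le, hdisj', hsup', ⟨eT⟩, ⟨eA₁⟩⟩ :=
      innerCompl_map hAB.some hTA hA₁le hA₁disj hA₁sup
    have hsT' : IsSimpleModule R T' := .congr eT.symm
    -- new complements for the recursive call
    have hstep : ∀ (X X' Y Y₁ : Submodule R M), IsCompl X X' → Y ⊓ Y₁ = ⊥ → Y ⊔ Y₁ = X →
        IsCompl Y₁ (X' ⊔ Y) := by
      intro X X' Y Y₁ hX hYdisj hYsup
      have hYX : Y ≤ X := hYsup ▸ le_sup_left
      have hY₁X : Y₁ ≤ X := hYsup ▸ le_sup_right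
      constructor
      · rw [disjoint_iff]
        refine le_antisymm (fun x hx => ?_) bot_le
        obtain ⟨a', ha', t, ht, hx'⟩ := Submodule.mem_sup.mp hx.2
        have haX : a' ∈ X := by
          have : a' = x - t := by rw [← hx']; abel
          exact this ▸ Submodule.sub_mem _ (hY₁X hx.1) (hYX ht)
        have ha0 : a' = 0 := by
          have : a' ∈ X ⊓ X' := ⟨haX, ha'⟩
          rwa [disjoint_iff.mp hX.disjoint, Submodule.mem_bot] at this
        have hxt : x = t := by rw [← hx', ha0, zero_add]
        have : x ∈ Y ⊓ Y₁ := ⟨hxt ▸ ht, hx.1⟩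
        rwa [hYdisj, Submodule.mem_bot] at this
      · rw [codisjoint_iff, ← sup_assoc, sup_comm Y₁ X', sup_assoc, sup_comm Y₁ Y, hYsup,
          sup_comm X' X, ← codisjoint_iff]
        exact hX.codisjoint
    have hcA : IsCompl A₁ (A' ⊔ T) := hstep A A' T A₁ hA hA₁disj hA₁sup
    have hcB : IsCompl B₁ (B' ⊔ T') := hstep B B' T' B₁ hB hdisj' hsup'
    -- A₁ < A
    have hlt : A₁ < A := by
      refine lt_of_le_of_ne hA₁le fun hEq => ?_
      have : T ≤ A₁ := hEq ▸ hTA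
      have : T = ⊥ := by
        rw [← hA₁disj]; exact le_antisymm (le_inf le_rfl this) inf_le_left
      exact hTatom.1 this
    obtain ⟨j⟩ := ih A₁ hlt B₁ (A' ⊔ T) (B' ⊔ T') hcA hcB ⟨eA₁⟩
    -- final simple cancellation inside N := B' ⊔ T'
    have hTA'disj : T ⊓ A' = ⊥ := by
      rw [← le_bot_iff, ← disjoint_iff.mp hA.disjoint]
      exact inf_le_inf_left _ (le_refl A') |>.trans (inf_le_inf_right _ hTA)
    have hT'B'disj : T' ⊓ B' = ⊥ := by
      rw [← le_bot_iff, ← disjoint_iff.mp hB.disjoint]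
      exact inf_le_inf_right _ hT'le
    obtain ⟨T₂, A₂, hT₂le, hA₂le, hdisj₂, hsup₂, ⟨eT₂⟩, ⟨eA₂⟩⟩ :=
      innerCompl_map j (le_sup_right : T ≤ A' ⊔ T) le_sup_left hTA'disj (sup_comm T A')
    have hsT₂ : IsSimpleModule R T₂ := .congr eT₂.symm
    obtain ⟨k⟩ := simple_cancel_inner hT₂le hA₂le hdisj₂ hsup₂
      (le_sup_right : T' ≤ B' ⊔ T') le_sup_left hT'B'disj (sup_comm T' B')
      hsT₂ hsT' ⟨(eT₂.symm.trans eT)⟩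
    exact ⟨(eA₂.trans k)⟩

end CancelMain

section RingSide
variable {S : Type*} [Ring S]

/-- Right multiplication as a left-module endomorphism. -/
def mulRightLM (b : S) : S →ₗ[S] S where
  toFun x := x * b
  map_add' x y := add_mul x y b
  map_smul' r x := by simp [smul_eq_mul, mul_assoc]

@[simp] lemma mulRightLM_apply (b x : S) : mulRightLM b x = x * b := rfl

lemma idem_isCompl {g : S} (hg : g * g = g) :
    IsCompl (Ideal.span {g}) (Ideal.span {1 - g}) := by
  constructor
  · rw [disjoint_iff]
    refine le_antisymm (fun x hx => ?_) bot_le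
    obtain ⟨r, hr⟩ := Submodule.mem_span_singleton.mp hx.1
    obtain ⟨r', hr'⟩ := Submodule.mem_span_singleton.mp hx.2
    have h1 : x * g = x := by
      rw [← hr]; simp only [smul_eq_mul, mul_assoc, hg]
    have h2 : x * g = 0 := by
      rw [← hr']; simp only [smul_eq_mul, mul_assoc, sub_mul, one_mul, hg, sub_self, mul_zero]
    rw [Submodule.mem_bot, ← h1, h2]
  · rw [codisjoint_iff, eq_top_iff]
    intro x _
    have : x = x • g + x • (1 - g) := by simp [smul_eq_mul, mul_sub]
    exact this ▸ Submodule.add_mem_sup (Submodule.smul_mem _ x (Submodule.mem_span_singleton_self g))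
      (Submodule.smul_mem _ x (Submodule.mem_span_singleton_self (1 - g)))

theorem semisimple_stable_range_one [IsSemisimpleRing S] (I : Ideal S) (a : S)
    (h : Ideal.span {a} ⊔ I = ⊤) : ∃ x ∈ I, IsUnit (a + x) := by
  set Sa := Ideal.span {a} with hSa
  -- complement of Sa inside I
  obtain ⟨I', hI'le, hI'disj, hI'sup⟩ := exists_inner_compl (inf_le_right : Sa ⊓ I ≤ I)
  have hc : IsCompl Sa I' := by
    constructor
    · rw [disjoint_iff]
      have : Sa ⊓ I' = (Sa ⊓ I) ⊓ I' := by
        rw [inf_assoc, inf_eq_right.mpr hI'le]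
      rw [this, hI'disj]
    · rw [codisjoint_iff]
      have h1 : Sa ⊔ I' = Sa ⊔ I := by
        conv_rhs => rw [← hI'sup]
        rw [← sup_assoc, sup_eq_left.mpr (inf_le_left : Sa ⊓ I ≤ Sa)]
      rw [h1, h]
  set pr := Submodule.projectionOnto Sa I' hc with hpr
  set e : S := (pr 1 : S) with he
  have key : ∀ x : S, x * e = (pr x : S) := by
    intro x
    have : pr x = x • pr 1 := by rw [← map_smul, smul_eq_mul, mul_one]
    rw [this]; rfl
  have idE : ∀ x ∈ Sa, x * e = x := by
    intro x hx
    rw [key]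
    exact congrArg Subtype.val (Submodule.projectionOnto_apply_left hc ⟨x, hx⟩)
  have zeroE : ∀ x ∈ I', x * e = 0 := by
    intro x hx
    rw [key]
    exact congrArg Subtype.val (Submodule.projectionOnto_apply_of_mem_right hc (x := x) hx)
  have ha_mem : a ∈ Sa := Ideal.subset_span (Set.mem_singleton a)
  have hae : a * e = a := idE a ha_mem
  have hee : e * e = e := idE e (pr 1).2
  have h1e : 1 - e ∈ I' := by
    rw [← Submodule.projectionOnto_apply_eq_zero_iff hc]
    apply Subtype.ext
    show ((pr (1 - e) : S)) = ((0 : Sa) : S)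
    rw [← key]; simp [sub_mul, hee]
  obtain ⟨b, hb⟩ := Submodule.mem_span_singleton.mp ((pr 1).2 : e ∈ Sa)
  rw [smul_eq_mul, ← he] at hb
  set f := a * b with hf
  have haba : a * b * a = a := by rw [mul_assoc, hb, hae]
  have hff : f * f = f := by rw [hf, ← mul_assoc, haba]
  -- span identifications
  have hSe_eq : Ideal.span {e} = Sa := by
    refine le_antisymm ?_ ?_
    · rw [Ideal.span_le, Set.singleton_subset_iff]; exact (pr 1).2
    · rw [hSa, Ideal.span_le, Set.singleton_subset_iff]
      have : a = a • e := by rw [smul_eq_mul, hae]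
      exact this ▸ Submodule.smul_mem _ a (Submodule.mem_span_singleton_self e)
  have hI'_eq : Ideal.span {1 - e} = I' := by
    refine le_antisymm ?_ (fun x hx => ?_)
    · rw [Ideal.span_le, Set.singleton_subset_iff]; exact h1e
    · have : x = x • (1 - e) := by
        rw [smul_eq_mul, mul_sub, mul_one, zeroE x hx, sub_zero]
      exact this ▸ Submodule.smul_mem _ x (Submodule.mem_span_singleton_self (1 - e))
  -- the equivalence span e ≃ span f
  have hmem_ef : ∀ x ∈ Ideal.span {e}, x * b ∈ Ideal.span {f} := by
    intro x hx
    obtain ⟨r, hr⟩ := Submodule.mem_span_singleton.mp hx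
    rw [smul_eq_mul] at hr
    have : x * b = (r * b) • f := by
      rw [← hr, smul_eq_mul, hf, mul_assoc r e, ← hb, mul_assoc b, mul_assoc r b]
    exact this ▸ Submodule.smul_mem _ _ (Submodule.mem_span_singleton_self f)
  have hmem_fe : ∀ x ∈ Ideal.span {f}, x * a ∈ Ideal.span {e} := by
    intro x hx
    obtain ⟨r, hr⟩ := Submodule.mem_span_singleton.mp hx
    rw [smul_eq_mul] at hr
    have : x * a = (r * a) • e := by
      rw [← hr, smul_eq_mul, hf, mul_assoc r, haba, mul_assoc, hae]
    exact this ▸ Submodule.smul_mem _ _ (Submodule.mem_span_singleton_self e)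
  have hxe : ∀ x ∈ Ideal.span {e}, x * e = x := by
    intro x hx
    obtain ⟨r, hr⟩ := Submodule.mem_span_singleton.mp hx
    rw [smul_eq_mul] at hr
    rw [← hr, mul_assoc, hee]
  have hxf : ∀ x ∈ Ideal.span {f}, x * f = x := by
    intro x hx
    obtain ⟨r, hr⟩ := Submodule.mem_span_singleton.mp hx
    rw [smul_eq_mul] at hr
    rw [← hr, mul_assoc, hff]
  -- linear equivalence span e ≃ span f
  let μ₁ : Ideal.span {e} →ₗ[S] Ideal.span {f} :=
    ((mulRightLM b).comp (Ideal.span {e}).subtype).codRestrict _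
      (fun x => hmem_ef x.1 x.2)
  let μ₂ : Ideal.span {f} →ₗ[S] Ideal.span {e} :=
    ((mulRightLM a).comp (Ideal.span {f}).subtype).codRestrict _
      (fun x => hmem_fe x.1 x.2)
  have hμ₁₂ : μ₂.comp μ₁ = LinearMap.id := by
    ext x
    show ((x : S) * b) * a = (x : S)
    rw [mul_assoc, hb, hxe x.1 x.2]
  have hμ₂₁ : μ₁.comp μ₂ = LinearMap.id := by
    ext x
    show ((x : S) * a) * b = (x : S)
    rw [mul_assoc, ← hf, hxf x.1 x.2]
  have hequiv : Nonempty ((Ideal.span {e} : Ideal S) ≃ₗ[S] (Ideal.span {f} : Ideal S)) :=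
    ⟨LinearEquiv.ofLinear μ₁ μ₂ hμ₂₁ hμ₁₂⟩
  -- cancellation
  obtain ⟨hcan⟩ := cancel_compl (Ideal.span {e}) (Ideal.span {f})
    (Ideal.span {1 - e}) (Ideal.span {1 - f}) (idem_isCompl hee) (idem_isCompl hff) hequiv
  set hrev := hcan.symm with hrevdef
  set g : S := (hrev ⟨1 - f, Submodule.mem_span_singleton_self _⟩ : S) with hg
  have hg_mem : g ∈ I := by
    have : g ∈ Ideal.span {1 - e} := (hrev _).2
    rw [hI'_eq] at this
    exact hI'le this
  have hone_f : ∀ x ∈ Ideal.span {1 - f}, x * (1 - f) = x := by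
    intro x hx
    obtain ⟨r, hr⟩ := Submodule.mem_span_singleton.mp hx
    rw [smul_eq_mul] at hr
    rw [← hr, mul_assoc]
    congr 1
    rw [sub_mul, one_mul, mul_sub, mul_one, hff, sub_self, sub_zero]
  have hg_key : ∀ x (hx : x ∈ Ideal.span {1 - f}), ((hrev ⟨x, hx⟩ : _) : S) = x * g := by
    intro x hx
    have hx' : (⟨x, hx⟩ : Ideal.span {1 - f}) =
        x • ⟨1 - f, Submodule.mem_span_singleton_self _⟩ := by
      apply Subtype.ext
      show x = x * (1 - f)
      rw [hone_f x hx]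
    rw [hx', map_smul]
    rfl
  have hfg : f * g = 0 := by
    have h0 : (f • (⟨1 - f, Submodule.mem_span_singleton_self _⟩ : Ideal.span {1 - f})) = 0 := by
      apply Subtype.ext
      show f * (1 - f) = 0
      rw [mul_sub, mul_one, hff, sub_self]
    have : f * g = ((hrev (f • ⟨1 - f, Submodule.mem_span_singleton_self _⟩) : _) : S) := by
      rw [map_smul]; rfl
    rw [this, h0, map_zero, Submodule.coe_zero]
  have hge : g * e = 0 := by
    have : g ∈ Ideal.span {1 - e} := (hrev _).2
    obtain ⟨r, hr⟩ := Submodule.mem_span_singleton.mp this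
    rw [smul_eq_mul] at hr
    rw [← hr, mul_assoc, sub_mul, one_mul, hee, sub_self, mul_zero]
  have hginj : ∀ x (hx : x ∈ Ideal.span {1 - f}), x * g = 0 → x = 0 := by
    intro x hx hx0
    have : ((hrev ⟨x, hx⟩ : _) : S) = 0 := by rw [hg_key x hx, hx0]
    have h2 : hrev ⟨x, hx⟩ = 0 := Subtype.ext this
    have h3 : (⟨x, hx⟩ : Ideal.span {1 - f}) = 0 := by
      have := hrev.injective (by rw [h2, map_zero] : hrev ⟨x, hx⟩ = hrev 0)
      exact this
    exact congrArg Subtype.val h3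
  -- u = a + g is a unit
  set u := a + g with hu
  have hfa : f * a = a := by rw [hf, mul_assoc, hb, hae]
  have hinj : Function.Injective (mulRightLM u) := by
    rw [injective_iff_map_eq_zero]
    intro s hs
    have hs' : s * a + s * g = 0 := by
      rw [← mul_add]; exact hs
    have hsa : s * a = 0 := by
      have : (s * a + s * g) * e = 0 := by rw [hs', zero_mul]
      rwa [add_mul, mul_assoc s g e, hge, mul_zero, add_zero, mul_assoc, hae] at this
    have hsg : s * g = 0 := by rwa [hsa, zero_add] at hs'
    have hsf : s * f = 0 := by rw [hf, ← mul_assoc, hsa, zero_mul]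
    have hmem : s * (1 - f) ∈ Ideal.span {1 - f} :=
      Submodule.smul_mem _ s (Submodule.mem_span_singleton_self _)
    have : s * (1 - f) * g = 0 := by
      rw [mul_sub, mul_one, sub_mul, hsf, zero_mul, sub_zero, hsg]
    have h0 : s * (1 - f) = 0 := hginj _ hmem this
    have : s = s * f + s * (1 - f) := by rw [mul_sub, mul_one, add_sub_cancel]
    rw [this, hsf, h0, add_zero]
  have hsurj : Function.Surjective (mulRightLM u) :=
    IsArtinian.surjective_of_injective_endomorphism _ hinj
  obtain ⟨z, hz⟩ := hsurj 1
  have hzu : z * u = 1 := hz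
  have huz : u * z = 1 := by
    apply hinj
    show (u * z) * u = 1 * u
    rw [mul_assoc, hzu, mul_one, one_mul]
  exact ⟨g, hg_mem, ⟨⟨u, z, huz, hzu⟩, rfl⟩⟩

end RingSide

section Final
variable {R : Type*} [Ring R]

lemma exists_left_inv_of_unit_quotient
    (π : R →+* ((⊥ : TwoSidedIdeal R).jacobson.ringCon.Quotient))
    (hπ : ∀ x y : R, π x = π y ↔ (⊥ : TwoSidedIdeal R).jacobson.ringCon x y)
    (hsurj : Function.Surjective π) {v : R} (hv : IsUnit (π v)) :
    ∃ l, l * v = 1 := by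
  obtain ⟨ζ, hζ⟩ := hv
  obtain ⟨z, hzv⟩ := hsurj (↑ζ⁻¹)
  have h1 : π (z * v) = π 1 := by
    rw [map_mul, hzv, ← hζ, map_one]
    exact ζ.inv_mul
  have h2 : z * v - 1 ∈ (⊥ : TwoSidedIdeal R).jacobson := by
    rw [← TwoSidedIdeal.rel_iff]
    exact (hπ _ _).mp h1
  rw [TwoSidedIdeal.mem_jacobson_iff] at h2
  obtain ⟨z', hz'⟩ := h2 1
  rw [TwoSidedIdeal.mem_bot] at hz'
  have : z' * (z * v) = 1 := by
    have := sub_eq_zero.mp hz'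
    rw [mul_one] at this
    calc z' * (z * v) = z' * (z * v - 1) + z' := by
          rw [mul_sub, mul_one, sub_add_cancel]
    _ = 1 := this
  exact ⟨z' * z, by rw [mul_assoc]; exact this⟩

lemma isUnit_of_isUnit_quotient
    (π : R →+* ((⊥ : TwoSidedIdeal R).jacobson.ringCon.Quotient))
    (hπ : ∀ x y : R, π x = π y ↔ (⊥ : TwoSidedIdeal R).jacobson.ringCon x y)
    (hsurj : Function.Surjective π) {u : R} (hu : IsUnit (π u)) : IsUnit u := by
  obtain ⟨l, hl⟩ := exists_left_inv_of_unit_quotient π hπ hsurj hu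
  have hul : IsUnit (π l) := by
    obtain ⟨ζ, hζ⟩ := hu
    have h1 : π l * ↑ζ = 1 := by rw [hζ, ← map_mul, hl, map_one]
    have : π l = ↑ζ⁻¹ := by
      calc π l = π l * ↑ζ * ↑ζ⁻¹ := by rw [mul_assoc, ζ.mul_inv, mul_one]
      _ = ↑ζ⁻¹ := by rw [h1, one_mul]
    exact this ▸ ζ⁻¹.isUnit
  obtain ⟨k, hk⟩ := exists_left_inv_of_unit_quotient π hπ hsurj hul
  have huk : u = k := by
    calc u = (k * l) * u := by rw [hk, one_mul]
    _ = k * (l * u) := by rw [mul_assoc]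
    _ = k := by rw [hl, mul_one]
  exact ⟨⟨u, l, by rw [huk, hk], hl⟩, rfl⟩

end Final

/-- In a semilocal ring R, if I is a left ideal and Ra + I = R, then the coset
a + I contains a unit. -/
theorem stmt_12 (R : Type*) [Ring R]
    (hsemilocal : IsSemisimpleRing ((⊥ : TwoSidedIdeal R).jacobson.ringCon.Quotient) ∧
      IsArtinianRing ((⊥ : TwoSidedIdeal R).jacobson.ringCon.Quotient))
    (I : Ideal R) (a : R) (h : Ideal.span {a} ⊔ I = ⊤) :
    ∃ x ∈ I, IsUnit (a + x) := by
  haveI h1 := hsemilocal.1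
  set c := (⊥ : TwoSidedIdeal R).jacobson.ringCon with hc
  set π : R →+* c.Quotient := c.mk' with hπdef
  have hsurj : Function.Surjective π := Quotient.mk''_surjective
  have hπ : ∀ x y : R, π x = π y ↔ c x y := fun x y => Quotient.eq''
  -- map the hypothesis to the quotient
  have hmap : Ideal.span {π a} ⊔ I.map π = ⊤ := by
    have := congrArg (Ideal.map π) h
    rwa [Ideal.map_sup, Ideal.map_span, Set.image_singleton, Ideal.map_top] at this
  obtain ⟨x', hx'mem, hx'unit⟩ := semisimple_stable_range_one (I.map π) (π a) hmap
  obtain ⟨x, hxI, rfl⟩ := Ideal.mem_map_iff_of_surjective π hsurj |>.mp hx'mem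
  refine ⟨x, hxI, isUnit_of_isUnit_quotient π hπ hsurj ?_⟩
  rwa [map_add]
end

section
/- Let R be a semisimple Artinian ring, I a left ideal, a ∈ R, and write Ra + I = Re for an idempotent e. Then there exists i ∈ I such that a + i = u·e for some unit u ∈ R. -/
open Submodule LinearMap

section helpers
variable {R : Type*} [Ring R] {M N : Type*} [AddCommGroup M] [Module R M]
  [AddCommGroup N] [Module R N]

/-- image of a simple-or-bot submodule is simple-or-bot -/
lemma simpleOrBot_map (l : M →ₗ[R] N) {S : Submodule R M}
    (h : IsSimpleModule R S ∨ S = ⊥) : IsSimpleModule R (S.map l) ∨ S.map l = ⊥ := by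
  rcases h with h | rfl
  swap
  · right; simp
  · set f : S →ₗ[R] N := l.comp S.subtype with hf
    have hr : range f = S.map l := by rw [hf, range_comp, range_subtype]
    rcases eq_bot_or_eq_top (ker f) with hk | hk
    · left
      have e1 : (S ⧸ ker f) ≃ₗ[R] S := Submodule.quotEquivOfEqBot _ hk
      have e2 : (S ⧸ ker f) ≃ₗ[R] (S.map l) := (f.quotKerEquivRange).trans (LinearEquiv.ofEq _ _ hr)
      exact IsSimpleModule.congr (e2.symm.trans e1)
    · right
      have e2 : (S ⧸ ker f) ≃ₗ[R] (S.map l) := (f.quotKerEquivRange).trans (LinearEquiv.ofEq _ _ hr)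
      have : Subsingleton (S ⧸ ker f) := by
        rw [hk]
        infer_instance
      have : Subsingleton (S.map l) := e2.symm.toEquiv.subsingleton
      exact (Submodule.eq_bot_iff _).mpr fun x hx => by
        have := Subsingleton.elim (⟨x, hx⟩ : S.map l) 0
        simpa using congrArg Subtype.val this

lemma iSup_fin_succ {α : Type*} [CompleteLattice α] {n : ℕ} (g : Fin (n+1) → α) :
    ⨆ i, g i = g 0 ⊔ ⨆ i : Fin n, g i.succ := by
  apply le_antisymm
  · exact iSup_le (fun i => Fin.cases le_sup_left (fun j => le_sup_of_le_right (le_iSup (fun i : Fin n => g i.succ) j)) i)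
  · exact sup_le (le_iSup g 0) (iSup_le fun j => le_iSup g j.succ)

/-- disjoint sup is equivalent to the product -/
noncomputable def supEquivProd {p q : Submodule R M} (h : p ⊓ q = ⊥) :
    (↥p × ↥q) ≃ₗ[R] ↥(p ⊔ q) := by
  set f : ↥p × ↥q →ₗ[R] M := p.subtype.coprod q.subtype with hf
  have hinj : Function.Injective f := by
    rw [← ker_eq_bot]
    refine (Submodule.eq_bot_iff _).mpr fun x hx => ?_
    have hx' : (x.1 : M) + x.2 = 0 := hx
    have h1 : (x.1 : M) ∈ p ⊓ q := ⟨x.1.2, by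
      rw [show (x.1 : M) = -(x.2 : M) from eq_neg_of_add_eq_zero_left hx']
      exact neg_mem x.2.2⟩
    have : (x.1 : M) = 0 := by rw [h] at h1; simpa using h1
    have h2 : (x.2 : M) = 0 := by rw [this] at hx'; simpa using hx'
    ext <;> simp_all
  have hr : range f = p ⊔ q := by rw [hf, range_coprod, range_subtype, range_subtype]
  exact (LinearEquiv.ofInjective f hinj).trans (LinearEquiv.ofEq _ _ hr)

/-- complements-style: isomorphic disjoint pieces give isomorphic sups -/
noncomputable def supCongr {p p' q : Submodule R M} (h : p ⊓ q = ⊥) (h' : p' ⊓ q = ⊥)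
    (g : ↥p ≃ₗ[R] ↥p') : ↥(p ⊔ q) ≃ₗ[R] ↥(p' ⊔ q) :=
  (supEquivProd h).symm.trans
    ((g.prodCongr (LinearEquiv.refl R ↥q)).trans (supEquivProd h'))

end helpers
section quotsimple
variable {R : Type*} [Ring R] {M : Type*} [AddCommGroup M] [Module R M]

lemma quot_simple_congr [IsSemisimpleModule R M] {S S' : Submodule R M}
    (hS : IsSimpleModule R S) (hS' : IsSimpleModule R S') (g : ↥S ≃ₗ[R] ↥S') :
    Nonempty ((M ⧸ S) ≃ₗ[R] (M ⧸ S')) := by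
  by_cases heq : S = S'
  · subst heq; exact ⟨LinearEquiv.refl R _⟩
  have aS : IsAtom S := isSimpleModule_iff_isAtom.mp hS
  have aS' : IsAtom S' := isSimpleModule_iff_isAtom.mp hS'
  have hdis : S ⊓ S' = ⊥ := by
    rcases (inf_le_left : S ⊓ S' ≤ S).lt_or_eq with hlt | he
    · exact aS.2 _ hlt
    · exfalso
      have hle : S ≤ S' := inf_eq_left.mp he
      rcases aS'.le_iff.mp hle with hb | hb
      · exact aS.1 hb
      · exact heq hb
  obtain ⟨W, hW⟩ := ComplementedLattice.exists_isCompl (S ⊔ S')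
  have hWtop : S ⊔ S' ⊔ W = ⊤ := codisjoint_iff.mp hW.codisjoint
  have hWbot : (S ⊔ S') ⊓ W = ⊥ := disjoint_iff.mp hW.disjoint
  have hSW : S ⊓ W = ⊥ := by
    rw [← le_bot_iff, ← hWbot]; exact inf_le_inf_right _ le_sup_left
  have hS'W : S' ⊓ W = ⊥ := by
    rw [← le_bot_iff, ← hWbot]; exact inf_le_inf_right _ le_sup_right
  have key : ∀ A B : Submodule R M, A ⊔ B = S ⊔ S' → A ⊓ B = ⊥ →
      IsCompl A (B ⊔ W) := by
    intro A B hAB hABbot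
    constructor
    · rw [disjoint_iff]
      have h1 : (B ⊔ W) ⊓ (A ⊔ B) = B := by
        rw [sup_inf_assoc_of_le _ (le_sup_right : B ≤ A ⊔ B), hAB, inf_comm, hWbot, sup_bot_eq]
      have : A ⊓ (B ⊔ W) = A ⊓ (A ⊔ B) ⊓ (B ⊔ W) := by
        rw [inf_eq_left.mpr (le_sup_left : A ≤ A ⊔ B)]
      rw [this, inf_assoc, inf_comm (A ⊔ B) (B ⊔ W), h1, hABbot]
    · rw [codisjoint_iff, ← sup_assoc, hAB, hWtop]
  have c1 : IsCompl S (S' ⊔ W) := key S S' rfl hdis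
  have c2 : IsCompl S' (S ⊔ W) := key S' S (sup_comm _ _) (by rw [inf_comm]; exact hdis)
  exact ⟨(Submodule.quotientEquivOfIsCompl _ _ c1).trans
    ((supCongr hS'W hSW g.symm).trans (Submodule.quotientEquivOfIsCompl _ _ c2).symm)⟩

end quotsimple
section cancel
universe u
variable {R : Type*} [Ring R]

lemma quot_cancel_aux (n : ℕ) :
    ∀ {M : Type u} [AddCommGroup M] [Module R M] [IsSemisimpleModule R M]
    (K K' : Submodule R M) (S : Fin n → Submodule R M),
    (∀ i, IsSimpleModule R (S i) ∨ S i = ⊥) → K = ⨆ i, S i →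
    (↥K ≃ₗ[R] ↥K') → Nonempty ((M ⧸ K) ≃ₗ[R] (M ⧸ K')) := by
  induction n with
  | zero =>
    intro M _ _ _ K K' S hS hK f
    have hKbot : K = ⊥ := by rw [hK]; exact iSup_of_empty _
    haveI : Subsingleton ↥K := by rw [hKbot]; infer_instance
    haveI : Subsingleton ↥K' := f.symm.toEquiv.subsingleton
    have hK'bot : K' = ⊥ := (Submodule.eq_bot_iff _).mpr fun x hx => by
      have := Subsingleton.elim (⟨x, hx⟩ : ↥K') 0
      simpa using congrArg Subtype.val this
    exact ⟨(Submodule.quotEquivOfEqBot K hKbot).trans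
      (Submodule.quotEquivOfEqBot K' hK'bot).symm⟩
  | succ n ih =>
    intro M _ _ _ K K' S hS hK f
    by_cases h0 : S 0 = ⊥
    · exact ih K K' (fun i => S i.succ) (fun i => hS i.succ)
        (by rw [hK, iSup_fin_succ, h0, bot_sup_eq]) f
    haveI hSsimple : IsSimpleModule R (S 0) := (hS 0).resolve_right h0
    set S₀ : Submodule R M := S 0 with hS₀def
    have hS₀K : S₀ ≤ K := hK ▸ le_iSup S 0
    set S₀ₖ : Submodule R ↥K := S₀.comap K.subtype with hS₀ₖdef
    set S'ₖ : Submodule R ↥K' := S₀ₖ.map (f : ↥K →ₗ[R] ↥K') with hS'ₖdef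
    set S' : Submodule R M := S'ₖ.map K'.subtype with hS'def
    have hS'K' : S' ≤ K' := Submodule.map_subtype_le _ _
    have g : ↥S₀ ≃ₗ[R] ↥S' :=
      (Submodule.comapSubtypeEquivOfLe hS₀K).symm.trans
        ((f.submoduleMap S₀ₖ).trans
          (Submodule.equivMapOfInjective K'.subtype (Submodule.injective_subtype K') S'ₖ))
    haveI hS'simple : IsSimpleModule R S' := IsSimpleModule.congr g.symm
    obtain ⟨φ⟩ := quot_simple_congr hSsimple hS'simple g
    set Kq : Submodule R (M ⧸ S₀) := K.map S₀.mkQ with hKqdef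
    set Kq' : Submodule R (M ⧸ S') := Kq.map (φ : (M ⧸ S₀) →ₗ[R] (M ⧸ S')) with hKq'def
    set K'q : Submodule R (M ⧸ S') := K'.map S'.mkQ with hK'qdef
    set T : Fin n → Submodule R (M ⧸ S') :=
      fun i => ((S i.succ).map S₀.mkQ).map (φ : (M ⧸ S₀) →ₗ[R] (M ⧸ S')) with hTdef
    have hT : ∀ i, IsSimpleModule R (T i) ∨ T i = ⊥ :=
      fun i => simpleOrBot_map _ (simpleOrBot_map _ (hS i.succ))
    have hmkQS₀ : S₀.map S₀.mkQ = ⊥ := by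
      rw [eq_bot_iff]
      rintro x ⟨y, hy, rfl⟩
      simpa [Submodule.mem_bot, Submodule.Quotient.mk_eq_zero] using hy
    have hKq' : Kq' = ⨆ i, T i := by
      rw [hKq'def, hKqdef, hK, Submodule.map_iSup, Submodule.map_iSup,
        iSup_fin_succ (fun i : Fin (n+1) => ((S i).map S₀.mkQ).map
          (φ : (M ⧸ S₀) →ₗ[R] (M ⧸ S')))]
      rw [show ((S 0).map S₀.mkQ).map (φ : (M ⧸ S₀) →ₗ[R] (M ⧸ S')) = ⊥ by
        rw [← hS₀def, hmkQS₀, Submodule.map_bot], bot_sup_eq]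
    -- the iso between Kq' and K'q
    set g1 : ↥K →ₗ[R] M ⧸ S₀ := S₀.mkQ.comp K.subtype with hg1
    have hker1 : LinearMap.ker g1 = S₀ₖ := by
      rw [hg1, LinearMap.ker_comp, Submodule.ker_mkQ]
    have hrange1 : LinearMap.range g1 = Kq := by
      rw [hg1, LinearMap.range_comp, Submodule.range_subtype]
    have A1 : (↥K ⧸ S₀ₖ) ≃ₗ[R] ↥Kq :=
      ((Submodule.quotEquivOfEq _ _ hker1.symm).trans g1.quotKerEquivRange).trans
        (LinearEquiv.ofEq _ _ hrange1)
    set g2 : ↥K' →ₗ[R] M ⧸ S' := S'.mkQ.comp K'.subtype with hg2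
    have hker2 : LinearMap.ker g2 = S'ₖ := by
      rw [hg2, LinearMap.ker_comp, Submodule.ker_mkQ, hS'def,
        Submodule.comap_map_eq_of_injective (Submodule.injective_subtype K') S'ₖ]
    have hrange2 : LinearMap.range g2 = K'q := by
      rw [hg2, LinearMap.range_comp, Submodule.range_subtype]
    have A3 : (↥K' ⧸ S'ₖ) ≃ₗ[R] ↥K'q :=
      ((Submodule.quotEquivOfEq _ _ hker2.symm).trans g2.quotKerEquivRange).trans
        (LinearEquiv.ofEq _ _ hrange2)
    have A2 : (↥K ⧸ S₀ₖ) ≃ₗ[R] (↥K' ⧸ S'ₖ) :=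
      Submodule.Quotient.equiv S₀ₖ S'ₖ f rfl
    have ψ : ↥Kq' ≃ₗ[R] ↥K'q :=
      (φ.submoduleMap Kq).symm.trans (A1.symm.trans (A2.trans A3))
    obtain ⟨ρ⟩ := ih Kq' K'q T hT hKq' ψ
    exact ⟨(Submodule.quotientQuotientEquivQuotient S₀ K hS₀K).symm.trans
      ((Submodule.Quotient.equiv Kq Kq' φ rfl).trans
        (ρ.trans (Submodule.quotientQuotientEquivQuotient S' K' hS'K')))⟩

end cancel
section pieces
variable {R : Type*} [Ring R]

lemma exists_fin_simples [IsSemisimpleRing R] (K : Submodule R R) :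
    ∃ (n : ℕ) (S : Fin n → Submodule R R),
      (∀ i, IsSimpleModule R (S i) ∨ S i = ⊥) ∧ K = ⨆ i, S i := by
  obtain ⟨s, hind, hsSup, hsimple⟩ :=
    IsSemisimpleModule.exists_sSupIndep_sSup_simples_eq_top R ↥K
  have hfin : s.Finite := WellFoundedGT.finite_of_sSupIndep hind
  haveI : Fintype s := hfin.fintype
  refine ⟨Fintype.card s, fun i => ((((Fintype.equivFin s).symm i) : Submodule R ↥K)).map
    K.subtype, fun i => ?_, ?_⟩
  · exact simpleOrBot_map _ (Or.inl (hsimple _ ((Fintype.equivFin s).symm i).2))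
  · rw [(Fintype.equivFin s).symm.iSup_comp
      (g := fun p : s => Submodule.map K.subtype (p : Submodule R ↥K)),
      ← Submodule.map_iSup, ← sSup_eq_iSup', hsSup, Submodule.map_top,
      Submodule.range_subtype]

lemma compl_congr [IsSemisimpleRing R] {K K' L L' : Submodule R R}
    (hK : IsCompl K L) (hK' : IsCompl K' L') (f : ↥K ≃ₗ[R] ↥K') :
    Nonempty (↥L ≃ₗ[R] ↥L') := by
  obtain ⟨n, S, hS, hKsup⟩ := exists_fin_simples K
  obtain ⟨q⟩ := quot_cancel_aux n K K' S hS hKsup f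
  exact ⟨((Submodule.quotientEquivOfIsCompl K L hK).symm.trans q).trans
    (Submodule.quotientEquivOfIsCompl K' L' hK')⟩

end pieces

/-- In a semisimple Artinian ring, if Ra + I = Re with e idempotent, then
a + i = u·e for some i ∈ I and unit u. -/
theorem stmt_13 (R : Type*) [Ring R] [IsSemisimpleRing R] [IsArtinianRing R]
    (I : Ideal R) (a e : R) (he : IsIdempotentElem e)
    (h : Ideal.span {a} ⊔ I = Ideal.span {e}) :
    ∃ i ∈ I, ∃ u : Rˣ, a + i = (u : R) * e := by
  classical
  set A : Submodule R R := Ideal.span {a} with hAdef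
  set E : Submodule R R := Ideal.span {e} with hEdef
  have mem_e : ∀ x : R, x ∈ E → x * e = x := by
    intro x hx
    obtain ⟨r, hr⟩ := Submodule.mem_span_singleton.mp hx
    rw [← hr, smul_eq_mul, mul_assoc, he]
  have haA : a ∈ A := Submodule.mem_span_singleton_self a
  have hAE : A ≤ E := h ▸ le_sup_left
  have hae : a * e = a := mem_e a (hAE haA)
  set ρa : R →ₗ[R] R := LinearMap.toSpanSingleton R R a with hρa
  set ρe : R →ₗ[R] R := LinearMap.toSpanSingleton R R e with hρe
  set F : Submodule R R := LinearMap.ker ρe with hFdef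
  have hFe : ∀ x : R, x ∈ F → x * e = 0 := fun x hx => by
    simpa [hFdef, LinearMap.mem_ker, hρe, LinearMap.toSpanSingleton_apply, smul_eq_mul] using hx
  have hEF : IsCompl E F := by
    constructor
    · rw [disjoint_iff, eq_bot_iff]
      rintro x ⟨hxE, hxF⟩
      have := mem_e x hxE
      rw [hFe x hxF] at this
      simp [← this]
    · rw [codisjoint_iff, eq_top_iff]
      rintro x -
      have h1 : x * e ∈ E := Submodule.mem_span_singleton.mpr ⟨x, rfl⟩
      have h2 : x - x * e ∈ F := by
        simp only [hFdef, LinearMap.mem_ker, hρe, LinearMap.toSpanSingleton_apply,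
          smul_eq_mul, sub_mul, mul_assoc, he.eq, sub_self]
      have := Submodule.add_mem_sup h1 h2
      rwa [add_sub_cancel] at this
  set L : Submodule R R := LinearMap.ker ρa with hLdef
  obtain ⟨K, hLK⟩ := ComplementedLattice.exists_isCompl L
  set fK : ↥K →ₗ[R] R := ρa.comp K.subtype with hfK
  have hfKinj : Function.Injective fK := by
    rw [← LinearMap.ker_eq_bot, hfK, LinearMap.ker_comp]
    rw [← Submodule.disjoint_iff_comap_eq_bot]
    exact hLK.disjoint.symm
  have hmapL : Submodule.map ρa L = ⊥ := by
    rw [eq_bot_iff]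
    rintro x ⟨y, hy, rfl⟩
    exact hy
  have hAr : A = LinearMap.range ρa := by
    rw [hAdef, ← Ideal.submodule_span_eq, hρa, LinearMap.span_singleton_eq_range]
  have hfKrange : LinearMap.range fK = A := by
    rw [hfK, LinearMap.range_comp, Submodule.range_subtype]
    apply le_antisymm
    · refine le_trans (Submodule.map_mono le_top) ?_
      rw [Submodule.map_top, ← hAr]
    · have htop : L ⊔ K = ⊤ := codisjoint_iff.mp hLK.codisjoint
      have h2 : A = Submodule.map ρa ⊤ := by rw [Submodule.map_top, ← hAr]
      rw [h2, ← htop, Submodule.map_sup, hmapL, bot_sup_eq]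
  set e1 : ↥K ≃ₗ[R] ↥A :=
    (LinearEquiv.ofInjective fK hfKinj).trans (LinearEquiv.ofEq _ _ hfKrange) with he1def
  obtain ⟨Cm, hCm⟩ := ComplementedLattice.exists_isCompl (A ⊓ I)
  set J : Submodule R R := Cm ⊓ I with hJdef
  have hJI : J ≤ I := inf_le_right
  have hAJ : A ⊓ J = ⊥ := by
    rw [hJdef, show A ⊓ (Cm ⊓ I) = (A ⊓ I) ⊓ Cm by rw [inf_comm Cm I, ← inf_assoc],
      disjoint_iff.mp hCm.disjoint]
  have hAIJ : (A ⊓ I) ⊔ J = I := by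
    rw [hJdef, ← sup_inf_assoc_of_le Cm (inf_le_right : A ⊓ I ≤ I),
      codisjoint_iff.mp hCm.codisjoint, top_inf_eq]
  have hAJE : A ⊔ J = E := by
    rw [← h]
    apply le_antisymm
    · exact sup_le le_sup_left (le_trans hJI le_sup_right)
    · refine sup_le le_sup_left ?_
      rw [← hAIJ]
      exact sup_le (le_trans inf_le_left le_sup_left) le_sup_right
  set C : Submodule R R := J ⊔ F with hCdef
  have hJE : J ≤ E := hAJE ▸ le_sup_right
  have hAC : IsCompl A C := by
    constructor
    · rw [disjoint_iff]
      have h1 : C ⊓ E = J := by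
        rw [hCdef, sup_inf_assoc_of_le _ hJE, inf_comm F E,
          disjoint_iff.mp hEF.disjoint, sup_bot_eq]
      have h2 : A ⊓ C = A ⊓ E ⊓ C := by rw [inf_eq_left.mpr hAE]
      rw [h2, inf_assoc, inf_comm E C, h1, hAJ]
    · rw [codisjoint_iff, hCdef, ← sup_assoc, hAJE, codisjoint_iff.mp hEF.codisjoint]
  obtain ⟨e2⟩ := compl_congr hLK.symm hAC e1
  set σ : R ≃ₗ[R] R :=
    (Submodule.prodEquivOfIsCompl L K hLK).symm.trans
      ((e2.prodCongr e1).trans (Submodule.prodEquivOfIsCompl C A hAC.symm)) with hσdef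
  have hσL : ∀ x : R, x ∈ L → σ x ∈ C := by
    intro x hx
    have h1 := Submodule.prodEquivOfIsCompl_symm_apply_left L K hLK ⟨x, hx⟩
    rw [show ((⟨x, hx⟩ : ↥L) : R) = x from rfl] at h1
    have hux : σ x = (Submodule.prodEquivOfIsCompl C A hAC.symm)
        ((e2.prodCongr e1) ((Submodule.prodEquivOfIsCompl L K hLK).symm x)) := rfl
    have hx0 : σ x = ↑(e2 ⟨x, hx⟩) + ↑(e1 0) := by
      rw [hux, h1, show (e2.prodCongr e1) ((⟨x, hx⟩ : ↥L), (0 : ↥K)) = (e2 ⟨x, hx⟩, e1 0)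
        from rfl, Submodule.coe_prodEquivOfIsCompl']
    rw [hx0, map_zero]
    simp only [ZeroMemClass.coe_zero, add_zero]
    exact (e2 ⟨x, hx⟩).2
  have hσK : ∀ x : R, x ∈ K → σ x = x * a := by
    intro x hx
    have h1 := Submodule.prodEquivOfIsCompl_symm_apply_right L K hLK ⟨x, hx⟩
    rw [show ((⟨x, hx⟩ : ↥K) : R) = x from rfl] at h1
    have hux : σ x = (Submodule.prodEquivOfIsCompl C A hAC.symm)
        ((e2.prodCongr e1) ((Submodule.prodEquivOfIsCompl L K hLK).symm x)) := rfl
    have hx0 : σ x = ↑(e2 0) + ↑(e1 ⟨x, hx⟩) := by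
      rw [hux, h1, show (e2.prodCongr e1) ((0 : ↥L), (⟨x, hx⟩ : ↥K)) = (e2 0, e1 ⟨x, hx⟩)
        from rfl, Submodule.coe_prodEquivOfIsCompl']
    rw [hx0, map_zero]
    have hcoe : (↑(e1 ⟨x, hx⟩) : R) = fK ⟨x, hx⟩ := by
      rw [he1def]
      simp only [LinearEquiv.trans_apply, LinearEquiv.coe_ofEq_apply,
        LinearEquiv.ofInjective_apply]
    rw [hcoe]
    simp [hfK, hρa, LinearMap.toSpanSingleton_apply, smul_eq_mul]
  set w : R := σ 1 with hwdef
  have hσsmul : ∀ x : R, σ x = x * w := fun x => by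
    conv_lhs => rw [show x = x • (1 : R) by simp]
    rw [map_smul, smul_eq_mul, hwdef]
  have hσsymmsmul : ∀ x : R, σ.symm x = x * σ.symm 1 := fun x => by
    conv_lhs => rw [show x = x • (1 : R) by simp]
    rw [map_smul, smul_eq_mul]
  have hvw : σ.symm 1 * w = 1 := by
    have h1 := σ.apply_symm_apply 1
    rwa [hσsmul] at h1
  have hwv : w * σ.symm 1 = 1 := by
    have h1 := σ.symm_apply_apply 1
    rwa [hσsymmsmul, ← hwdef] at h1
  set u : Rˣ := ⟨w, σ.symm 1, hwv, hvw⟩ with hudef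
  have h1mem : (1 : R) ∈ L ⊔ K := by rw [codisjoint_iff.mp hLK.codisjoint]; trivial
  obtain ⟨l, hl, k, hk, hlk⟩ := Submodule.mem_sup.mp h1mem
  have hla : l * a = 0 := by
    simpa [hLdef, LinearMap.mem_ker, hρa, LinearMap.toSpanSingleton_apply, smul_eq_mul] using hl
  have hka : k * a = a := by
    have : (l + k) * a = a := by rw [hlk, one_mul]
    rw [add_mul, hla, zero_add] at this
    exact this
  have hCI : ∀ x ∈ C, x * e ∈ I := by
    intro x hx
    obtain ⟨j, hj, f', hf', rfl⟩ := Submodule.mem_sup.mp hx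
    have hje : j * e = j := mem_e j (hJE hj)
    rw [add_mul, hje, hFe f' hf', add_zero]
    exact hJI hj
  refine ⟨w * e - a, ?_, u, ?_⟩
  swap
  · show a + (w * e - a) = w * e
    rw [add_comm, sub_add_cancel]
  have hw1 : w = σ l + σ k := by rw [hwdef, ← hlk, map_add]
  have hfin : w * e - a = σ l * e := by
    rw [hw1, add_mul, hσK k hk, mul_assoc, hae, hka, add_sub_cancel_right]
  rw [hfin]
  exact hCI _ (hσL l hl)
end

section
/- Let R be a semisimple Artinian ring and (a_1,…,a_n)ᵗ a column vector over R with n ≥ 2 such that Σ R·a_i = Re for an idempotent e. Then there exists ε ∈ E_n(R) (the subgroup of GL_n(R) generated by elementary transvections) with ε·(a_1,…,a_n)ᵗ = (0,…,0,e)ᵗ. -/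
open Matrix LinearMap Submodule

section SS
variable {R : Type*} [Ring R] [IsSemisimpleRing R] [IsArtinianRing R]

omit [IsSemisimpleRing R] [IsArtinianRing R] in
private lemma key_iso (φ : R →ₗ[R] R) (q : Ideal R) (hq : IsSimpleModule R q)
    (hb : Submodule.map φ q ≠ ⊥) :
    IsSimpleModule R (Submodule.map φ q) ∧ Nonempty ((Submodule.map φ q) ≃ₗ[R] q) := by
  haveI := hq
  set ψ := φ.domRestrict q with hψ
  have hr : range ψ = Submodule.map φ q := LinearMap.range_domRestrict q φ
  rcases eq_bot_or_eq_top (ker ψ) with hk | hk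
  · have hinj : Function.Injective ψ := LinearMap.ker_eq_bot.mp hk
    have e1 : q ≃ₗ[R] LinearMap.range ψ := LinearEquiv.ofInjective ψ hinj
    have e2 : (LinearMap.range ψ) ≃ₗ[R] (Submodule.map φ q) := LinearEquiv.ofEq _ _ hr
    have e : (Submodule.map φ q) ≃ₗ[R] q := (e1.trans e2).symm
    exact ⟨IsSimpleModule.congr e, ⟨e⟩⟩
  · exfalso
    apply hb
    rw [← hr, LinearMap.range_eq_bot]
    exact LinearMap.ker_eq_top.mp hk

private lemma greedy (f g : Module.End R R) (hfg : ¬ LinearMap.range f ≤ LinearMap.range g) :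
    ∃ h : Module.End R R, LinearMap.range g < LinearMap.range (g + f ∘ₗ h) := by
  classical
  obtain ⟨D, hD⟩ := exists_isCompl (LinearMap.range f ⊓ LinearMap.range g)
  set C : Ideal R := D ⊓ LinearMap.range f with hCdef
  have hCf : C ≤ LinearMap.range f := inf_le_right
  have hC_sup : (LinearMap.range f ⊓ LinearMap.range g) ⊔ C = LinearMap.range f := by
    have hmod := sup_inf_assoc_of_le (x := LinearMap.range f ⊓ LinearMap.range g) D
      (inf_le_left (b := LinearMap.range g))
    rw [hD.sup_eq_top, top_inf_eq] at hmod
    rw [hCdef]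
    exact hmod.symm
  have hCg : C ⊓ LinearMap.range g = ⊥ := by
    rw [← le_bot_iff, ← hD.inf_eq_bot]
    exact le_inf (le_inf (inf_le_left.trans hCf) inf_le_right)
      (inf_le_left.trans inf_le_left)
  have hC0 : C ≠ ⊥ := by
    intro hbot
    apply hfg
    rw [← hC_sup, hbot, sup_bot_eq]
    exact inf_le_right
  obtain ⟨S, hSC, hS⟩ := (IsSemisimpleModule.eq_bot_or_exists_simple_le C).resolve_left hC0
  have hSatom : IsAtom S := isSimpleModule_iff_isAtom.mp hS
  have hSbot : S ≠ ⊥ := hSatom.1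
  have hSf : S ≤ LinearMap.range f := hSC.trans hCf
  have hSg : S ⊓ LinearMap.range g = ⊥ :=
    le_bot_iff.mp (hCg ▸ inf_le_inf_right _ hSC)
  -- find a simple p with map f p = S, on which f is injective
  have hQ : Submodule.map f (Submodule.comap f S) = S := by
    rw [Submodule.map_comap_eq, inf_eq_right.mpr hSf]
  have hex : ∃ p : Ideal R, (IsSimpleModule R p ∧ p ≤ Submodule.comap f S) ∧
      Submodule.map f p ≠ ⊥ := by
    by_contra hc
    push_neg at hc
    have hb : Submodule.map f (Submodule.comap f S) = ⊥ := by
      conv_lhs => rw [← IsSemisimpleModule.sSup_simples_le (Submodule.comap f S),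
        sSup_eq_iSup', Submodule.map_iSup]
      exact iSup_eq_bot.mpr fun ⟨q, hq⟩ => hc q ⟨hq.1, hq.2⟩
    rw [hQ] at hb
    exact hSbot hb
  obtain ⟨p, ⟨hp, hpQ⟩, hppos⟩ := hex
  have hpS : Submodule.map f p = S := by
    have h1 : Submodule.map f p ≤ S := (Submodule.map_mono hpQ).trans hQ.le
    exact (hSatom.le_iff.mp h1).resolve_left hppos
  have hkeyp := key_iso f p hp hppos
  have ep : p ≃ₗ[R] S := (hpS ▸ hkeyp.2.some.symm : p ≃ₗ[R] S).symm.symm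
  -- isotypic component of S
  set MS : Ideal R := sSup {q : Ideal R | IsSimpleModule R q ∧ Nonempty (q ≃ₗ[R] S)}
    with hMSdef
  have hSMS : S ≤ MS := le_sSup ⟨hS, ⟨LinearEquiv.refl R S⟩⟩
  have hMS_map : Submodule.map g MS ≤ MS := by
    conv_lhs => rw [hMSdef, sSup_eq_iSup', Submodule.map_iSup]
    refine iSup_le fun ⟨q, hq1, hq2⟩ => ?_
    rw [hMSdef]
    by_cases hb : Submodule.map g q = ⊥
    · simp [hb]
    · obtain ⟨hsimp, ⟨eqv⟩⟩ := key_iso g q hq1 hb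
      exact le_sSup (Set.mem_setOf.mpr ⟨hsimp, ⟨eqv.trans hq2.some⟩⟩)
  -- kernel of g meets MS
  have hK0 : LinearMap.ker g ⊓ MS ≠ ⊥ := by
    intro h0
    have hgMS : ∀ x ∈ MS, g x ∈ MS := fun x hx => hMS_map (Submodule.mem_map_of_mem hx)
    set g' : MS →ₗ[R] MS := g.restrict hgMS with hg'def
    have hinj : Function.Injective g' := by
      intro x y hxy
      have hmem : (x - y : R) ∈ LinearMap.ker g ⊓ MS := by
        constructor
        · have : g (x : R) = g (y : R) := congrArg Subtype.val hxy
          simp [LinearMap.mem_ker, map_sub, this]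
        · exact sub_mem x.2 y.2
      rw [h0] at hmem
      exact Subtype.ext (by simpa [sub_eq_zero] using hmem)
    have hsurj := IsArtinian.surjective_of_injective_endomorphism g' hinj
    have hSrange : S ≤ LinearMap.range g := by
      intro s hs
      obtain ⟨x, hx⟩ := hsurj ⟨s, hSMS hs⟩
      exact ⟨(x : R), congrArg Subtype.val hx⟩
    exact hSbot (le_bot_iff.mp (hSg ▸ le_inf le_rfl hSrange))
  obtain ⟨T, hTK0, hT⟩ :=
    (IsSemisimpleModule.eq_bot_or_exists_simple_le (LinearMap.ker g ⊓ MS)).resolve_left hK0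
  have hTker : T ≤ LinearMap.ker g := hTK0.trans inf_le_left
  have hTMS : T ≤ MS := hTK0.trans inf_le_right
  have hTatom : IsAtom T := isSimpleModule_iff_isAtom.mp hT
  -- T ≃ S via a projection
  obtain ⟨W0, hW0⟩ := exists_isCompl T
  set π' : R →ₗ[R] R := T.subtype ∘ₗ (Submodule.projectionOnto T W0 hW0) with hπ'def
  have hπ'T : ∀ x ∈ T, π' x = x := fun x hx => by
    simp [hπ'def, Submodule.projectionOnto_apply_left hW0 ⟨x, hx⟩]
  have hπ'mem : ∀ x, π' x ∈ T := fun x => (Submodule.projectionOnto T W0 hW0 x).2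
  have hexq : ∃ q : Ideal R, (IsSimpleModule R q ∧ Nonempty (q ≃ₗ[R] S)) ∧
      Submodule.map π' q ≠ ⊥ := by
    by_contra hc
    push_neg at hc
    have hb : Submodule.map π' MS = ⊥ := by
      rw [hMSdef, sSup_eq_iSup', Submodule.map_iSup]
      exact iSup_eq_bot.mpr fun ⟨q, hq⟩ => hc q hq
    have hTbot : T ≤ ⊥ := by
      intro x hx
      have : π' x ∈ Submodule.map π' MS := Submodule.mem_map_of_mem (hTMS hx)
      rwa [hb, hπ'T x hx] at this
    exact hTatom.1 (le_bot_iff.mp hTbot)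
  obtain ⟨q, ⟨hq1, hq2⟩, hπq⟩ := hexq
  have hkeyq := key_iso π' q hq1 hπq
  have hmapT : Submodule.map π' q = T := by
    have h1 : Submodule.map π' q ≤ T := by
      rintro y ⟨x, _, rfl⟩
      exact hπ'mem x
    exact (hTatom.le_iff.mp h1).resolve_left hπq
  have eTS : T ≃ₗ[R] S :=
    ((LinearEquiv.ofEq T (Submodule.map π' q) hmapT.symm).trans hkeyq.2.some).trans hq2.some
  have τ : T ≃ₗ[R] p := eTS.trans ep.symm
  -- build the complement W of T with map g W = range g
  obtain ⟨W', hW'⟩ := exists_isCompl (LinearMap.ker g)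
  obtain ⟨D', hD'⟩ := exists_isCompl T
  set Tc : Ideal R := D' ⊓ LinearMap.ker g with hTcdef
  have hTc_sup : T ⊔ Tc = LinearMap.ker g := by
    have hmod := sup_inf_assoc_of_le (x := T) D' hTker
    rw [hD'.sup_eq_top, top_inf_eq] at hmod
    rw [hTcdef]; exact hmod.symm
  set W : Ideal R := Tc ⊔ W' with hWdef
  have hWker : W ⊓ LinearMap.ker g = Tc := by
    have hmod := sup_inf_assoc_of_le (x := Tc) W' (inf_le_right : Tc ≤ LinearMap.ker g)
    rw [hWdef, hmod, inf_comm W' _, hW'.inf_eq_bot, sup_bot_eq]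
  have hWcompl : IsCompl T W := by
    constructor
    · rw [disjoint_iff]
      have h1 : T ⊓ W = T ⊓ (W ⊓ LinearMap.ker g) := by
        rw [inf_comm W _, ← inf_assoc, inf_eq_left.mpr hTker]
      rw [h1, hWker, hTcdef, ← inf_assoc, inf_comm T D']
      rw [← le_bot_iff]
      exact inf_le_left.trans (le_of_eq (by rw [inf_comm]; exact hD'.inf_eq_bot))
    · rw [codisjoint_iff, hWdef, ← sup_assoc, hTc_sup, hW'.sup_eq_top]
  have hgW : Submodule.map g W = LinearMap.range g := by
    have h2 : Submodule.map g Tc ≤ ⊥ := by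
      rintro y ⟨x, hx, rfl⟩
      exact (LinearMap.mem_ker.mp (hTcdef ▸ hx : x ∈ D' ⊓ LinearMap.ker g).2) ▸
        Submodule.zero_mem ⊥
    have h3 : Submodule.map g (LinearMap.ker g) ≤ ⊥ := by
      rintro y ⟨x, hx, rfl⟩
      exact (LinearMap.mem_ker.mp hx) ▸ Submodule.zero_mem ⊥
    have h4 : LinearMap.range g = Submodule.map g (LinearMap.ker g ⊔ W') := by
      rw [hW'.sup_eq_top, Submodule.map_top]
    rw [hWdef, Submodule.map_sup, le_bot_iff.mp h2, bot_sup_eq]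
    rw [h4, Submodule.map_sup, le_bot_iff.mp h3, bot_sup_eq]
  set π := Submodule.projectionOnto T W hWcompl with hπdef
  set h : Module.End R R := p.subtype ∘ₗ (τ.toLinearMap ∘ₗ (π : R →ₗ[R] T)) with hhdef
  have hhp : ∀ x, h x ∈ p := fun x => (τ (π x)).2
  have hrange : LinearMap.range (g + f ∘ₗ h) = LinearMap.range g ⊔ S := by
    apply le_antisymm
    · rintro y ⟨x, rfl⟩
      have : (g + f ∘ₗ h) x = g x + f (h x) := rfl
      rw [this]
      exact Submodule.add_mem _ (Submodule.mem_sup_left ⟨x, rfl⟩)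
        (Submodule.mem_sup_right (hpS ▸ Submodule.mem_map_of_mem (hhp x)))
    · refine sup_le ?_ ?_
      · intro y hy
        rw [← hgW] at hy
        obtain ⟨w, hw, rfl⟩ := hy
        refine ⟨w, ?_⟩
        have hπw : π w = 0 := Submodule.projectionOnto_apply_of_mem_right hWcompl hw
        show g w + f (h w) = g w
        rw [hhdef]
        simp [hπw]
      · intro s hs
        rw [← hpS] at hs
        obtain ⟨y, hy, rfl⟩ := hs
        set t := τ.symm ⟨y, hy⟩ with htdef
        refine ⟨(t : R), ?_⟩
        have hπt : π (t : R) = t := Submodule.projectionOnto_apply_left hWcompl t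
        show g (t : R) + f (h (t : R)) = f y
        have hgt : g (t : R) = 0 := LinearMap.mem_ker.mp (hTker t.2)
        rw [hgt, zero_add, hhdef]
        simp [hπt]
        simp [htdef]
  refine ⟨h, ?_⟩
  rw [hrange]
  refine left_lt_sup.mpr fun hle => hSbot ?_
  rw [← le_bot_iff, ← hSg]
  exact le_inf le_rfl hle

private lemma L1endo (f g : Module.End R R) :
    ∃ h : Module.End R R, LinearMap.range (g + f ∘ₗ h)
      = LinearMap.range f ⊔ LinearMap.range g := by
  obtain ⟨I, ⟨h₀, hI₀⟩, hImax⟩ := (set_has_maximal_iff_noetherian.mpr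
    (inferInstance : IsNoetherian R R))
    (Set.range fun h : Module.End R R => LinearMap.range (g + f ∘ₗ h))
    ⟨LinearMap.range (g + f ∘ₗ 0), ⟨0, rfl⟩⟩
  subst hI₀
  have hrf : LinearMap.range f ≤ LinearMap.range (g + f ∘ₗ h₀) := by
    by_contra hf
    obtain ⟨h₁, hlt⟩ := greedy f (g + f ∘ₗ h₀) hf
    have heq : g + f ∘ₗ h₀ + f ∘ₗ h₁ = g + f ∘ₗ (h₀ + h₁) := by
      rw [LinearMap.comp_add, add_assoc]
    rw [heq] at hlt
    exact hImax _ ⟨h₀ + h₁, rfl⟩ hlt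
  refine ⟨h₀, le_antisymm ?_ (sup_le hrf ?_)⟩
  · rintro y ⟨x, rfl⟩
    have : (g + f ∘ₗ h₀) x = g x + f (h₀ x) := rfl
    rw [this]
    exact Submodule.add_mem _ (Submodule.mem_sup_right ⟨x, rfl⟩)
      (Submodule.mem_sup_left ⟨h₀ x, rfl⟩)
  · rintro y ⟨x, rfl⟩
    have heq : g x = (g + f ∘ₗ h₀) x - f (h₀ x) := by
      simp [LinearMap.add_apply]
    rw [heq]
    exact Submodule.sub_mem _ ⟨x, rfl⟩ (hrf ⟨h₀ x, rfl⟩)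

private lemma L1 (a b : R) :
    ∃ t : R, Ideal.span {b + t * a} = Ideal.span {a} ⊔ Ideal.span {b} := by
  obtain ⟨h, hh⟩ := L1endo (LinearMap.toSpanSingleton R R a) (LinearMap.toSpanSingleton R R b)
  refine ⟨h 1, ?_⟩
  have hcomp : LinearMap.toSpanSingleton R R b +
      (LinearMap.toSpanSingleton R R a) ∘ₗ h = LinearMap.toSpanSingleton R R (b + h 1 * a) := by
    apply LinearMap.ext
    intro x
    have hx : h x = x * h 1 := by
      rw [← smul_eq_mul, ← h.map_smul, smul_eq_mul, mul_one]
    simp [LinearMap.toSpanSingleton_apply, smul_eq_mul, hx, mul_add, mul_assoc]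
  rw [← Ideal.submodule_span_eq, ← Ideal.submodule_span_eq, ← Ideal.submodule_span_eq,
    LinearMap.span_singleton_eq_range, LinearMap.span_singleton_eq_range,
    LinearMap.span_singleton_eq_range, ← hcomp, hh]

private lemma Ln (m : ℕ) (v : Fin m → R) (b : R) :
    ∃ t : Fin m → R, Ideal.span {b + ∑ i, t i * v i}
      = Ideal.span (Set.range v) ⊔ Ideal.span {b} := by
  induction m generalizing b with
  | zero =>
    refine ⟨0, ?_⟩
    simp [Set.range_eq_empty, Ideal.span_empty]
  | succ m ih =>
    obtain ⟨t', ht'⟩ := ih (v ∘ Fin.succ) b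
    obtain ⟨s, hs⟩ := L1 (v 0) (b + ∑ i, t' i * (v ∘ Fin.succ) i)
    refine ⟨Fin.cons s t', ?_⟩
    have hsum : b + ∑ i : Fin (m+1), (Fin.cons s t' : Fin (m+1) → R) i * v i
        = (b + ∑ i, t' i * (v ∘ Fin.succ) i) + s * v 0 := by
      rw [Fin.sum_univ_succ]
      simp only [Fin.cons_zero, Fin.cons_succ, Function.comp_apply]
      abel
    rw [hsum, hs, ht']
    have hrange : Set.range v = insert (v 0) (Set.range (v ∘ Fin.succ)) := by
      ext x
      simp only [Set.mem_range, Set.mem_insert_iff, Function.comp_apply]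
      constructor
      · rintro ⟨i, rfl⟩
        rcases Fin.eq_zero_or_eq_succ i with h0 | ⟨j, rfl⟩
        · left; rw [h0]
        · right; exact ⟨j, rfl⟩
      · rintro (rfl | ⟨j, rfl⟩)
        · exact ⟨0, rfl⟩
        · exact ⟨j.succ, rfl⟩
    rw [hrange, Ideal.span_insert, sup_assoc]

end SS
section Mat
variable {R : Type*} [Ring R] {n : ℕ}

private lemma stdBasis_neg (i j : Fin n) (x : R) :
    Matrix.single i j (-x) = - Matrix.single i j x := by
  ext a b
  by_cases h : i = a ∧ j = b <;> simp [Matrix.single, h]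

private def elem (i j : Fin n) (hij : i ≠ j) (x : R) : (Matrix (Fin n) (Fin n) R)ˣ where
  val := 1 + Matrix.single i j x
  inv := 1 + Matrix.single i j (-x)
  val_inv := by
    have h0 := (Matrix.single_mul_single_of_ne (c := x) i j i (Ne.symm hij) (-x) :
      Matrix.single i j x * Matrix.single i j (-x) = 0)
    rw [mul_add, add_mul, add_mul, one_mul, mul_one, h0, stdBasis_neg]
    abel_nf
    simp
  inv_val := by
    have h0 := (Matrix.single_mul_single_of_ne (c := -x) i j i (Ne.symm hij) x :
      Matrix.single i j (-x) * Matrix.single i j x = 0)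
    rw [mul_add, add_mul, add_mul, one_mul, mul_one, h0, stdBasis_neg]
    abel_nf
    simp

private lemma mulVec_std (i j : Fin n) (x : R) (c : Fin n → R) :
    Matrix.mulVec (Matrix.single i j x) c = fun k => if k = i then x * c j else 0 := by
  funext k
  simp [Matrix.mulVec, dotProduct, Matrix.single, ite_and, eq_comm]

private lemma mulVec_elem (i j : Fin n) (hij : i ≠ j) (x : R) (c : Fin n → R) :
    Matrix.mulVec ((elem i j hij x).val) c = Function.update c i (c i + x * c j) := by
  show Matrix.mulVec (1 + Matrix.single i j x) c = _
  rw [Matrix.add_mulVec, Matrix.one_mulVec, mulVec_std]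
  funext k
  rcases eq_or_ne k i with rfl | hk
  · simp
  · simp [Function.update_of_ne hk, hk]

variable (R n) in
private def Egen : Set ((Matrix (Fin n) (Fin n) R)ˣ) :=
  {M : (Matrix (Fin n) (Fin n) R)ˣ | ∃ (i j : Fin n) (x : R), i ≠ j ∧
    M.val = 1 + Matrix.single i j x}

variable (R n) in
private def Esub : Subgroup ((Matrix (Fin n) (Fin n) R)ˣ) := Subgroup.closure (Egen R n)

private def Reach (c d : Fin n → R) : Prop :=
  ∃ ε ∈ Esub R n, Matrix.mulVec ε.val c = d

private lemma Reach.refl (c : Fin n → R) : Reach c c :=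
  ⟨1, one_mem _, by simp [Matrix.one_mulVec]⟩

private lemma Reach.step (c : Fin n → R) (i j : Fin n) (hij : i ≠ j) (x : R) :
    Reach c (Function.update c i (c i + x * c j)) :=
  ⟨elem i j hij x, Subgroup.subset_closure ⟨i, j, x, hij, rfl⟩, mulVec_elem i j hij x c⟩

private lemma Reach.trans {c d e : Fin n → R} (h1 : Reach c d) (h2 : Reach d e) :
    Reach c e := by
  obtain ⟨ε1, hm1, rfl⟩ := h1
  obtain ⟨ε2, hm2, rfl⟩ := h2
  exact ⟨ε2 * ε1, mul_mem hm2 hm1, by rw [Units.val_mul, Matrix.mulVec_mulVec]⟩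

private lemma reach_sum (l : Fin n) (c : Fin n → R) :
    ∀ (m : ℕ) (emb : Fin m → Fin n), (∀ i, emb i ≠ l) → ∀ (t : Fin m → R),
    Reach c (Function.update c l (c l + ∑ i, t i * c (emb i)))
  | 0, emb, hemb, t => by
    simpa using Reach.refl c
  | (m+1), emb, hemb, t => by
    have step1 := reach_sum l c m (emb ∘ Fin.succ) (fun i => hemb i.succ) (t ∘ Fin.succ)
    set c1 := Function.update c l (c l + ∑ i, (t ∘ Fin.succ) i * c ((emb ∘ Fin.succ) i))
      with hc1
    refine step1.trans ?_
    have hstep := Reach.step c1 l (emb 0) (Ne.symm (hemb 0)) (t 0)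
    have heq : Function.update c1 l (c1 l + t 0 * c1 (emb 0))
        = Function.update c l (c l + ∑ i, t i * c (emb i)) := by
      rw [hc1, Function.update_idem]
      congr 1
      rw [Function.update_self, Function.update_of_ne (hemb 0), Fin.sum_univ_succ]
      simp only [Function.comp_apply]
      abel
    rwa [heq] at hstep

private lemma reach_clear (l : Fin n) (u v e : R) (hvu : v * u = e) :
    ∀ (s : Finset (Fin n)), l ∉ s → ∀ (c : Fin n → R), c l = u →
    Reach c (fun k => if k ∈ s then c k - c k * e else c k) := by
  intro s
  induction s using Finset.induction with
  | empty => intro _ c _; simpa using Reach.refl c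
  | @insert i s hi ih =>
    intro hls c hcl
    have hlns : l ∉ s := fun hmem => hls (Finset.mem_insert_of_mem hmem)
    have hil : i ≠ l := fun hh => hls (hh ▸ Finset.mem_insert_self i s)
    refine (ih hlns c hcl).trans ?_
    set c1 : Fin n → R := fun k => if k ∈ s then c k - c k * e else c k with hc1
    have hc1i : c1 i = c i := by simp [hc1, hi]
    have hc1l : c1 l = u := by simp [hc1, hlns, hcl]
    have hstep := Reach.step c1 i l hil (-(c i * v))
    have heq : Function.update c1 i (c1 i + -(c i * v) * c1 l)
        = fun k => if k ∈ insert i s then c k - c k * e else c k := by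
      funext k
      rcases eq_or_ne k i with rfl | hk
      · rw [Function.update_self, hc1i, hc1l]
        simp only [Finset.mem_insert_self, if_pos]
        rw [neg_mul, mul_assoc, hvu, sub_eq_add_neg]
      · rw [Function.update_of_ne hk, hc1]
        simp only [Finset.mem_insert]
        rcases eq_or_ne k i with rfl | _
        · exact absurd rfl hk
        · simp [hk]
    rwa [heq] at hstep

end Mat

set_option maxHeartbeats 1000000 in
/-- In a semisimple Artinian ring, a column vector (a_1,…,a_n) (n ≥ 2) with
Σ R·a_i = Re, e idempotent, can be transformed by an element of E_n(R) into
(0,…,0,e). -/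
theorem stmt_14 (R : Type*) [Ring R] [IsSemisimpleRing R] [IsArtinianRing R]
    (n : ℕ) (hn : 2 ≤ n) (a : Fin n → R) (e : R) (he : IsIdempotentElem e)
    (h : Ideal.span (Set.range a) = Ideal.span {e}) :
    ∃ ε ∈ Subgroup.closure
        {M : (Matrix (Fin n) (Fin n) R)ˣ | ∃ (i j : Fin n) (x : R), i ≠ j ∧
          M.val = 1 + Matrix.single i j x},
      Matrix.mulVec ε.val a =
        fun k => if k.1 = n - 1 then e else 0 := by
  classical
  have hn1 : n - 1 < n := by omega
  set l : Fin n := ⟨n - 1, hn1⟩ with hl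
  set i0 : Fin n := ⟨0, by omega⟩ with hi0
  have hi0l : i0 ≠ l := by
    intro hc
    have : (0 : ℕ) = n - 1 := congrArg Fin.val hc
    omega
  -- every a i is fixed by right multiplication by e
  have hae : ∀ i, a i * e = a i := by
    intro i
    have hmem : a i ∈ Ideal.span {e} := h ▸ Ideal.subset_span (Set.mem_range_self i)
    rw [← Ideal.submodule_span_eq] at hmem
    obtain ⟨r, hr⟩ := Submodule.mem_span_singleton.mp hmem
    rw [← hr, smul_eq_mul, mul_assoc, he]
  -- combine all coordinates into the last one
  set emb : Fin (n-1) → Fin n := Fin.castLE (by omega) with hemb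
  have hembl : ∀ i, emb i ≠ l := by
    intro i hc
    have h1 : (i : ℕ) = n - 1 := congrArg Fin.val hc
    have := i.isLt
    omega
  obtain ⟨t, ht⟩ := Ln (n-1) (fun i => a (emb i)) (a l)
  set u : R := a l + ∑ i, t i * a (emb i) with hu
  have hra : Set.range a = insert (a l) (Set.range fun i => a (emb i)) := by
    ext x
    simp only [Set.mem_range, Set.mem_insert_iff]
    constructor
    · rintro ⟨k, rfl⟩
      rcases eq_or_ne k l with rfl | hk
      · left; rfl
      · right
        have hklt : (k : ℕ) < n - 1 := by
          have h1 := k.isLt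
          have h2 : (k : ℕ) ≠ n - 1 := fun hc => hk (Fin.ext hc)
          omega
        refine ⟨⟨k.1, hklt⟩, ?_⟩
        congr 1
    · rintro (rfl | ⟨i, rfl⟩)
      · exact ⟨l, rfl⟩
      · exact ⟨emb i, rfl⟩
  have hspanu : Ideal.span {u} = Ideal.span {e} := by
    rw [hu, ht, ← h, hra, Ideal.span_insert, sup_comm]
  obtain ⟨v, hvu⟩ : ∃ v : R, v * u = e := by
    have hmem : e ∈ Ideal.span {u} :=
      hspanu ▸ Ideal.subset_span (Set.mem_singleton e)
    rw [← Ideal.submodule_span_eq] at hmem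
    obtain ⟨r, hr⟩ := Submodule.mem_span_singleton.mp hmem
    exact ⟨r, hr⟩
  have hue : u * e = u := by
    have hmem : u ∈ Ideal.span {e} := by
      rw [← hspanu]
      exact Ideal.subset_span (Set.mem_singleton u)
    rw [← Ideal.submodule_span_eq] at hmem
    obtain ⟨r, hr⟩ := Submodule.mem_span_singleton.mp hmem
    rw [← hr, smul_eq_mul, mul_assoc, he]
  -- step 1 : reach (a with last entry u)
  have r1 : Reach a (Function.update a l u) := reach_sum l a (n-1) emb hembl t
  set a1 : Fin n → R := Function.update a l u with ha1
  -- step 2 : clear all other entries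
  have r2 := reach_clear l u v e hvu (Finset.univ.erase l) (Finset.notMem_erase l _)
    a1 (Function.update_self l u a)
  set d1 : Fin n → R := fun k => if k = l then u else 0 with hd1def
  have hd1 : (fun k => if k ∈ Finset.univ.erase l then a1 k - a1 k * e else a1 k) = d1 := by
    funext k
    rcases eq_or_ne k l with rfl | hk
    · simp [hd1def, ha1]
    · have ha1k : a1 k = a k := Function.update_of_ne hk _ _
      simp [hd1def, Finset.mem_erase, hk, ha1k, hae k, sub_self]
  rw [hd1] at r2
  -- step 3 : put e into position i0
  have s3 := Reach.step d1 i0 l hi0l v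
  set d2 : Fin n → R := fun k => if k = l then u else if k = i0 then e else 0 with hd2def
  have hd2 : Function.update d1 i0 (d1 i0 + v * d1 l) = d2 := by
    funext k
    rcases eq_or_ne k i0 with rfl | hk
    · rw [Function.update_self]
      simp [hd1def, hd2def, hi0l, hvu]
    · rw [Function.update_of_ne hk]
      rcases eq_or_ne k l with rfl | hk2
      · simp [hd1def, hd2def]
      · simp [hd1def, hd2def, hk2, hk]
  rw [hd2] at s3
  -- step 4 : kill position l
  have s4 := Reach.step d2 l i0 (Ne.symm hi0l) (-u)
  set d3 : Fin n → R := fun k => if k = i0 then e else 0 with hd3def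
  have hd3 : Function.update d2 l (d2 l + -u * d2 i0) = d3 := by
    funext k
    rcases eq_or_ne k l with rfl | hk
    · rw [Function.update_self]
      have e1 : d2 l = u := by simp [hd2def]
      have e2 : d2 i0 = e := by simp [hd2def, hi0l]
      have e3 : d3 l = (0 : R) := by simp [hd3def, Ne.symm hi0l]
      rw [e1, e2, e3, neg_mul, hue, add_neg_cancel]
    · rw [Function.update_of_ne hk]
      simp [hd2def, hd3def, hk]
  rw [hd3] at s4
  -- step 5 : copy e into position l
  have s5 := Reach.step d3 l i0 (Ne.symm hi0l) 1
  set d4 : Fin n → R := fun k => if k = l then e else if k = i0 then e else 0 with hd4def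
  have hd4 : Function.update d3 l (d3 l + 1 * d3 i0) = d4 := by
    funext k
    rcases eq_or_ne k l with rfl | hk
    · rw [Function.update_self]
      simp [hd3def, hd4def, Ne.symm hi0l, one_mul]
    · rw [Function.update_of_ne hk]
      simp [hd3def, hd4def, hk]
  rw [hd4] at s5
  -- step 6 : kill position i0
  have s6 := Reach.step d4 i0 l hi0l (-e)
  set d5 : Fin n → R := fun k => if k = l then e else 0 with hd5def
  have hd5 : Function.update d4 i0 (d4 i0 + -e * d4 l) = d5 := by
    funext k
    rcases eq_or_ne k i0 with rfl | hk
    · rw [Function.update_self]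
      have e1 : d4 i0 = e := by simp [hd4def, hi0l]
      have e2 : d4 l = e := by simp [hd4def]
      have e3 : d5 i0 = (0 : R) := by simp [hd5def, hi0l]
      rw [e1, e2, e3, neg_mul, he, add_neg_cancel]
    · rw [Function.update_of_ne hk]
      simp [hd4def, hd5def, hk]
  rw [hd5] at s6
  -- put everything together
  have rtot : Reach a d5 := ((((r1.trans r2).trans s3).trans s4).trans s5).trans s6
  have hgoal : d5 = fun k => if k.1 = n - 1 then e else 0 := by
    funext k
    have : (k = l) ↔ ((k : ℕ) = n - 1) := by
      constructor
      · intro hc; exact congrArg Fin.val hc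
      · intro hc; exact Fin.ext hc
    simp only [hd5def, this]
  obtain ⟨ε, hε, happ⟩ := rtot
  exact ⟨ε, hε, by rw [happ, hgoal]⟩
end
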